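/- Let s ≥ 0 be a real number, let V₁, …, Vₙ be vector subspaces of a common finite-dimensional vector space, and fix a generating set {v^i_1, …, v^i_{m_i}} of each V_i. Consider the polyhedron P = { (d₁,…,dₙ) ∈ ℝⁿ : d_i ≥ 0 for all i, and Σ_{i∈I} d_i + dim(Σ_{i∈I^c} V_i) ≥ s for every I ⊆ {1,…,n} }. Then every vertex (extreme point) of P has the form Ĵ(i) for some tuple J = (J₁, …, Jₙ) with J_i ⊆ {v^i_1, …, v^i_{m_i}}, J₁ ∪ … ∪ Jₙ linearly independent of cardinality at least s, and some i ∈ {1,…,n} with Ĵ(i) ≥ 0 coordinatewise, where Ĵ(i) := (#J₁, …, #Jₙ) + (s − (#J₁ + … + #Jₙ)) e_i and e₁, …, eₙ is the canonical basis of ℝⁿ. -/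

import Mathlib

open Module Set

noncomputable section

variable {W : Type*} [AddCommGroup W] [Module ℝ W]

/-- `Ĵ(i) = (#J₁,…,#Jₙ) + (s − (#J₁+…+#Jₙ)) eᵢ ∈ ℝⁿ`. -/
def hatJ {n : ℕ} {m : Fin n → ℕ} (s : ℝ) (J : (i : Fin n) → Finset (Fin (m i)))
    (i : Fin n) : Fin n → ℝ :=
  fun j => ((J j).card : ℝ) + (if j = i then s - ∑ l, ((J l).card : ℝ) else 0)

/-- Membership in the family `𝕁`: the subfamilies `J i ⊆ {v i 1, …, v i (m i)}` are such
that their union is a linearly independent system of cardinality at least `s`. -/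
def memJfam {n : ℕ} {m : Fin n → ℕ} (s : ℝ) (v : (i : Fin n) → Fin (m i) → W)
    (J : (i : Fin n) → Finset (Fin (m i))) : Prop :=
  LinearIndependent ℝ (fun p : Σ i : Fin n, {j // j ∈ J i} => v p.1 p.2.1) ∧
    s ≤ ∑ i, ((J i).card : ℝ)

/-- Membership in the family `𝕁̄`: `(J, i) ∈ 𝕁` with `Ĵ(i) ≥ 0` coordinatewise. -/
def memJbar {n : ℕ} {m : Fin n → ℕ} (s : ℝ) (v : (i : Fin n) → Fin (m i) → W)
    (p : ((i : Fin n) → Finset (Fin (m i))) × Fin n) : Prop :=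
  memJfam s v p.1 ∧ ∀ j, 0 ≤ hatJ s p.1 p.2 j

end


open Module Set Submodule

namespace VPHaux

variable {W : Type*} [AddCommGroup W] [Module ℝ W]

/-- Extract an independent subset of prescribed cardinality from a set spanning enough. -/
lemma exists_indep_subset_card [FiniteDimensional ℝ W] (c : ℕ) (t : Set W)
    (h : c ≤ finrank ℝ (span ℝ t)) :
    ∃ u : Set W, u ⊆ t ∧ u.Finite ∧ u.ncard = c ∧ LinearIndependent ℝ ((↑) : u → W) := by
  classical
  induction c with
  | zero => exact ⟨∅, empty_subset _, finite_empty, by simp, linearIndependent_empty _ _⟩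
  | succ c ih =>
    obtain ⟨u, hut, hufin, hucard, huind⟩ := ih (le_trans (Nat.le_succ c) h)
    have hnt : ¬ t ⊆ ↑(span ℝ u) := by
      intro hsub
      have h1 : span ℝ t ≤ span ℝ u := span_le.2 hsub
      haveI := hufin.fintype
      have h2 : finrank ℝ (span ℝ u) ≤ c := by
        have := finrank_span_le_card (R := ℝ) u
        rwa [← ncard_eq_toFinset_card', hucard] at this
      have h3 : finrank ℝ (span ℝ t) ≤ finrank ℝ (span ℝ u) := Submodule.finrank_mono h1
      omega
    obtain ⟨w, hwt, hwu⟩ := not_subset.1 hnt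
    have hwu' : w ∉ u := fun hw => hwu (subset_span hw)
    refine ⟨insert w u, insert_subset hwt hut, hufin.insert w, ?_, ?_⟩
    · rw [ncard_insert_of_notMem hwu' hufin, hucard]
    · exact (linearIndepOn_id_insert hwu').2 ⟨huind, hwu⟩

/-- From a family spanning a big enough space, extract an independent finite subfamily. -/
lemma exists_finset_indep {ι : Type*} [FiniteDimensional ℝ W] (f : ι → W) (c : ℕ)
    (h : c ≤ finrank ℝ (span ℝ (range f))) :
    ∃ F : Finset ι, F.card = c ∧ LinearIndependent ℝ (fun k : F => f k) := by
  classical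
  obtain ⟨u, hut, hufin, hucard, huind⟩ := exists_indep_subset_card c (range f) h
  choose g hg using fun w : u => (hut w.2 : (w : W) ∈ range f)
  have hginj : Function.Injective g := by
    intro a b hab
    apply Subtype.ext
    rw [← hg a, ← hg b, hab]
  haveI := hufin.fintype
  refine ⟨Finset.univ.image g, ?_, ?_⟩
  · rw [Finset.card_image_of_injective _ hginj, Finset.card_univ,
      ← Nat.card_eq_fintype_card, Nat.card_coe_set_eq, hucard]
  · have hmem : ∀ k : (Finset.univ.image g : Finset ι), f k ∈ u := by
      rintro ⟨k, hk⟩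
      obtain ⟨w, -, rfl⟩ := Finset.mem_image.1 hk
      rw [hg w]; exact w.2
    have hinj : Function.Injective (fun k : (Finset.univ.image g : Finset ι) =>
        (⟨f k, hmem k⟩ : u)) := by
      rintro ⟨k, hk⟩ ⟨k', hk'⟩ hkk
      obtain ⟨w, -, rfl⟩ := Finset.mem_image.1 hk
      obtain ⟨w', -, rfl⟩ := Finset.mem_image.1 hk'
      have h2 : f (g w) = f (g w') := congrArg Subtype.val hkk
      rw [hg w, hg w'] at h2
      exact Subtype.ext (congrArg g (Subtype.ext h2))
    have h3 := huind.comp _ hinj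
    have h4 : ((↑) : u → W) ∘ (fun k : (Finset.univ.image g : Finset ι) =>
        (⟨f k, hmem k⟩ : u)) = fun k : (Finset.univ.image g : Finset ι) => f k := by
      funext k; rfl
    rwa [h4] at h3

lemma disjoint_span_of_quotient_indep {ι : Type*} [Fintype ι] (X : Submodule ℝ W) (f : ι → W)
    (h : LinearIndependent ℝ (fun k => X.mkQ (f k))) :
    Disjoint (span ℝ (range f)) X := by
  rw [Submodule.disjoint_def]
  intro w hw hwX
  obtain ⟨a, rfl⟩ := (mem_span_range_iff_exists_fun ℝ).1 hw
  have h0 : ∑ i, a i • X.mkQ (f i) = 0 := by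
    have hq : X.mkQ (∑ i, a i • f i) = 0 := by
      rw [Submodule.mkQ_apply, Submodule.Quotient.mk_eq_zero]; exact hwX
    simpa [map_sum, map_smul] using hq
  have ha := Fintype.linearIndependent_iff.1 h a (by simpa using h0)
  simp [ha]

lemma indep_append {α β : Type*} [Fintype β] (X : Submodule ℝ W) (f : α → W) (g : β → W)
    (hf : LinearIndependent ℝ f) (hfX : ∀ a, f a ∈ X)
    (hg : LinearIndependent ℝ (fun b => X.mkQ (g b))) :
    LinearIndependent ℝ (Sum.elim f g) := by
  have hg' : LinearIndependent ℝ g := LinearIndependent.of_comp X.mkQ hg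
  apply hf.sum_type hg'
  have h1 : span ℝ (range f) ≤ X := span_le.2 (range_subset_iff.2 hfX)
  have h2 := (disjoint_span_of_quotient_indep X g hg).symm
  exact (h2.mono_left h1).symm.symm |>.symm.mono_right (span_le.2 (by
    rintro w ⟨b, rfl⟩; exact subset_span (mem_range_self b))) |>.symm

lemma finrank_map_mkQ [FiniteDimensional ℝ W] (X Y : Submodule ℝ W) :
    finrank ℝ (Y.map X.mkQ) + finrank ℝ X = finrank ℝ (X ⊔ Y : Submodule ℝ W) := by
  have hker : LinearMap.ker (X.mkQ.comp (X ⊔ Y).subtype) = comap (X ⊔ Y).subtype X := by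
    rw [LinearMap.ker_comp, Submodule.ker_mkQ]
  have hbot : X.map X.mkQ = ⊥ := by
    rw [eq_bot_iff, Submodule.map_le_iff_le_comap, Submodule.comap_bot, Submodule.ker_mkQ]
  have hrange : LinearMap.range (X.mkQ.comp (X ⊔ Y).subtype) = Y.map X.mkQ := by
    rw [LinearMap.range_comp, Submodule.range_subtype, Submodule.map_sup, hbot, bot_sup_eq]
  have hrn := LinearMap.finrank_range_add_finrank_ker (X.mkQ.comp (X ⊔ Y).subtype)
  rw [hrange, hker] at hrn
  have hequiv : finrank ℝ (comap (X ⊔ Y).subtype X) = finrank ℝ X :=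
    (Submodule.comapSubtypeEquivOfLe (le_sup_left : X ≤ X ⊔ Y)).finrank_eq
  rw [hequiv] at hrn
  exact hrn

lemma indep_sigma_update {n : ℕ} {m : Fin n → ℕ} (v : (i : Fin n) → Fin (m i) → W)
    (J : (l : Fin n) → Finset (Fin (m l))) (j : Fin n) (F : Finset (Fin (m j)))
    (hJ : J j = ∅)
    (h : LinearIndependent ℝ (Sum.elim (fun p : Σ l : Fin n, {k // k ∈ J l} => v p.1 p.2.1)
          (fun k : {k // k ∈ F} => v j k.1))) :
    LinearIndependent ℝ
      (fun p : Σ l : Fin n, {k // k ∈ Function.update J j F l} => v p.1 p.2.1) := by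
  classical
  have hmem : ∀ (l : Fin n) (k : Fin (m l)), k ∈ J l → k ∈ Function.update J j F l := by
    intro l k hk
    rcases eq_or_ne l j with rfl | hne
    · rw [hJ] at hk; exact absurd hk (Finset.notMem_empty k)
    · rwa [Function.update_of_ne hne]
  have hmemF : ∀ k : Fin (m j), k ∈ F → k ∈ Function.update J j F j := by
    intro k hk; rwa [Function.update_self]
  let ψ : ((Σ l : Fin n, {k // k ∈ J l}) ⊕ {k // k ∈ F}) →
      (Σ l : Fin n, {k // k ∈ Function.update J j F l}) :=
    Sum.elim (fun p => ⟨p.1, ⟨p.2.1, hmem p.1 p.2.1 p.2.2⟩⟩)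
      (fun k => ⟨j, ⟨k.1, hmemF k.1 k.2⟩⟩)
  have hbij : Function.Bijective ψ := by
    constructor
    · rintro (⟨l, k, hk⟩ | ⟨k, hk⟩) (⟨l', k', hk'⟩ | ⟨k', hk'⟩) hψ
      · obtain ⟨h1, h2⟩ := Sigma.mk.inj_iff.1 hψ
        subst h1
        have h3 : k = k' := by
          have := eq_of_heq h2
          exact Subtype.ext_iff.1 this
        subst h3; rfl
      · exfalso
        have h1 : l = j := congrArg Sigma.fst hψ
        subst h1
        rw [hJ] at hk; exact Finset.notMem_empty _ hk
      · exfalso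
        have h1 : j = l' := congrArg Sigma.fst hψ
        have h1' : l' = j := h1.symm
        subst h1'
        rw [hJ] at hk'; exact Finset.notMem_empty _ hk'
      · have h3 : k = k' := by
          obtain ⟨-, h2⟩ := Sigma.mk.inj_iff.1 hψ
          exact Subtype.ext_iff.1 (eq_of_heq h2)
        subst h3; rfl
    · rintro ⟨l, k, hk⟩
      rcases eq_or_ne l j with rfl | hne
      · exact ⟨Sum.inr ⟨k, by rwa [Function.update_self] at hk⟩, rfl⟩
      · exact ⟨Sum.inl ⟨l, ⟨k, by rwa [Function.update_of_ne hne] at hk⟩⟩, rfl⟩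
  have heq : ((fun p : Σ l : Fin n, {k // k ∈ Function.update J j F l} => v p.1 p.2.1) ∘
      (Equiv.ofBijective ψ hbij)) = Sum.elim
        (fun p : Σ l : Fin n, {k // k ∈ J l} => v p.1 p.2.1)
        (fun k : {k // k ∈ F} => v j k.1) := by
    funext q
    rcases q with p | k <;> rfl
  exact (linearIndependent_equiv (Equiv.ofBijective ψ hbij)).1 (by rw [heq]; exact h)

end VPHaux

open Module Set

set_option maxHeartbeats 4000000 in
set_option synthInstance.maxHeartbeats 1000000 in
theorem vertices_of_polyhedron_are_hatJ
    {W : Type*} [AddCommGroup W] [Module ℝ W] [FiniteDimensional ℝ W]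
    {n : ℕ} (hn : 0 < n) (m : Fin n → ℕ)
    (s : ℝ) (hs : 0 ≤ s)
    (V : Fin n → Submodule ℝ W)
    (v : (i : Fin n) → Fin (m i) → W)
    (hv : ∀ i, Submodule.span ℝ (Set.range (v i)) = V i) :
    ∀ x ∈ Set.extremePoints ℝ
      { d : Fin n → ℝ | (∀ i, 0 ≤ d i) ∧
        ∀ I : Finset (Fin n),
          s ≤ ∑ i ∈ I, d i + (finrank ℝ (⨆ i ∈ Iᶜ, V i : Submodule ℝ W) : ℝ) },
      ∃ p : ((i : Fin n) → Finset (Fin (m i))) × Fin n,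
        memJbar s v p ∧ x = hatJ s p.1 p.2 := by
  classical
  intro x hx
  rw [mem_extremePoints] at hx
  obtain ⟨⟨hx0, hxc⟩, hext⟩ := hx
  haveI : Nonempty (Fin n) := ⟨⟨0, hn⟩⟩
  set VS : Finset (Fin n) → Submodule ℝ W := fun A => A.sup V with hVSdef
  have hVS : ∀ A : Finset (Fin n), (⨆ i ∈ A, V i : Submodule ℝ W) = VS A :=
    fun A => (Finset.sup_eq_iSup A V).symm
  set r : Finset (Fin n) → ℕ := fun A => finrank ℝ (VS A) with hrdef
  have hxc' : ∀ I : Finset (Fin n), s ≤ ∑ i ∈ I, x i + (r Iᶜ : ℝ) := by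
    intro I; have := hxc I; rwa [hVS] at this
  set Tight : Finset (Fin n) → Prop := fun I => ∑ i ∈ I, x i + (r Iᶜ : ℝ) = s with hTdef
  -- ### perturbation principle
  have key : ∀ u : Fin n → ℝ, (∀ j, x j = 0 → u j = 0) →
      (∀ I : Finset (Fin n), Tight I → ∑ i ∈ I, u i = 0) → u = 0 := by
    intro u hu0 huT
    by_contra hune
    set f : Fin n → ℝ := fun j => if x j = 0 then 1 else x j / (|u j| + 1) with hfdef
    set g : Finset (Fin n) → ℝ := fun I => if Tight I then 1 else
      (∑ i ∈ I, x i + (r Iᶜ : ℝ) - s) / (|∑ i ∈ I, u i| + 1) with hgdef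
    have hf : ∀ j, 0 < f j := by
      intro j
      simp only [hfdef]
      split_ifs with h
      · norm_num
      · exact div_pos (lt_of_le_of_ne (hx0 j) (Ne.symm h)) (by positivity)
    have hg : ∀ I, 0 < g I := by
      intro I
      simp only [hgdef]
      split_ifs with h
      · norm_num
      · have h1 := hxc' I
        have h2 : ∑ i ∈ I, x i + (r Iᶜ : ℝ) ≠ s := h
        have h3 : s < ∑ i ∈ I, x i + (r Iᶜ : ℝ) := lt_of_le_of_ne h1 (Ne.symm h2)
        exact div_pos (by linarith) (by positivity)
    have hune1 : (Finset.univ : Finset (Fin n)).Nonempty := Finset.univ_nonempty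
    have hune2 : (Finset.univ : Finset (Finset (Fin n))).Nonempty := Finset.univ_nonempty
    set ε : ℝ := min (Finset.univ.inf' hune1 f) (Finset.univ.inf' hune2 g) with hεdef
    have hε : 0 < ε := by
      apply lt_min
      · exact (Finset.lt_inf'_iff hune1).2 (fun j _ => hf j)
      · exact (Finset.lt_inf'_iff hune2).2 (fun I _ => hg I)
    have hεf : ∀ j, ε ≤ f j := fun j =>
      le_trans (min_le_left _ _) (Finset.inf'_le f (Finset.mem_univ j))
    have hεg : ∀ I, ε ≤ g I := fun I =>
      le_trans (min_le_right _ _) (Finset.inf'_le g (Finset.mem_univ I))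
    have hmem : ∀ t : ℝ, |t| ≤ ε →
        (fun j => x j + t * u j) ∈ { d : Fin n → ℝ | (∀ i, 0 ≤ d i) ∧
          ∀ I : Finset (Fin n),
            s ≤ ∑ i ∈ I, d i + (finrank ℝ (⨆ i ∈ Iᶜ, V i : Submodule ℝ W) : ℝ) } := by
      intro t ht
      constructor
      · intro j
        rcases eq_or_ne (x j) 0 with h | h
        · simp [h, hu0 j h]
        · have h1 : ε ≤ x j / (|u j| + 1) := by
            have := hεf j; simp only [hfdef] at this; rwa [if_neg h] at this
          have h2 : |t * u j| ≤ x j := by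
            rw [abs_mul]
            calc |t| * |u j| ≤ ε * (|u j| + 1) := by
                  apply mul_le_mul ht (by linarith) (abs_nonneg _) (le_of_lt hε)
              _ ≤ (x j / (|u j| + 1)) * (|u j| + 1) := by
                  apply mul_le_mul_of_nonneg_right h1 (by positivity)
              _ = x j := by field_simp
          have h5 := abs_le.1 h2
          show (0:ℝ) ≤ x j + t * u j
          linarith [h5.1]
      · intro I
        show s ≤ ∑ i ∈ I, (x i + t * u i) + (finrank ℝ (⨆ i ∈ Iᶜ, V i : Submodule ℝ W) : ℝ)
        rw [hVS]
        have hsum : ∑ i ∈ I, (x i + t * u i) = ∑ i ∈ I, x i + t * ∑ i ∈ I, u i := by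
          rw [Finset.sum_add_distrib, Finset.mul_sum]
        rw [hsum]
        rcases eq_or_ne (∑ i ∈ I, x i + (r Iᶜ : ℝ)) s with h | h
        · have h0 := huT I h
          rw [h0]; rw [mul_zero, add_zero]; linarith [h.ge, h.le]
        · have h1 : ε ≤ (∑ i ∈ I, x i + (r Iᶜ : ℝ) - s) / (|∑ i ∈ I, u i| + 1) := by
            have := hεg I; simp only [hgdef] at this; rwa [if_neg h] at this
          have h2 : |t * ∑ i ∈ I, u i| ≤ ∑ i ∈ I, x i + (r Iᶜ : ℝ) - s := by
            rw [abs_mul]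
            calc |t| * |∑ i ∈ I, u i| ≤ ε * (|∑ i ∈ I, u i| + 1) := by
                  apply mul_le_mul ht (by linarith) (abs_nonneg _) (le_of_lt hε)
              _ ≤ ((∑ i ∈ I, x i + (r Iᶜ : ℝ) - s) / (|∑ i ∈ I, u i| + 1)) *
                    (|∑ i ∈ I, u i| + 1) := by
                  apply mul_le_mul_of_nonneg_right h1 (by positivity)
              _ = ∑ i ∈ I, x i + (r Iᶜ : ℝ) - s := by field_simp
          have := abs_le.1 h2
          linarith [this.1]
    have h1 := hmem ε (by rw [abs_of_pos hε])
    have h2 := hmem (-ε) (by rw [abs_neg, abs_of_pos hε])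
    have hseg : x ∈ openSegment ℝ (fun j => x j + (-ε) * u j) (fun j => x j + ε * u j) := by
      refine ⟨1/2, 1/2, by norm_num, by norm_num, by norm_num, ?_⟩
      funext j
      simp only [Pi.add_apply, Pi.smul_apply, smul_eq_mul]
      ring
    obtain ⟨he1, -⟩ := hext _ h2 _ h1 hseg
    apply hune
    funext j
    show u j = 0
    have h6 := congrFun he1 j
    have h3 : -ε * u j = 0 := by linarith [h6]
    rcases mul_eq_zero.1 h3 with h4 | h4
    · exact absurd (neg_eq_zero.1 h4) (ne_of_gt hε)
    · exact h4
  -- ### lattice structure of tight sets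
  have hVSunion : ∀ A B : Finset (Fin n), VS (A ∪ B) = VS A ⊔ VS B :=
    fun A B => Finset.sup_union
  have hVSmono : ∀ {A B : Finset (Fin n)}, A ⊆ B → VS A ≤ VS B :=
    fun h => Finset.sup_mono h
  have hr_mono : ∀ {A B : Finset (Fin n)}, A ⊆ B → r A ≤ r B :=
    fun h => Submodule.finrank_mono (hVSmono h)
  have hsubmod : ∀ A B : Finset (Fin n), r (A ∪ B) + r (A ∩ B) ≤ r A + r B := by
    intro A B
    have h1 : r (A ∪ B) = finrank ℝ (VS A ⊔ VS B : Submodule ℝ W) := by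
      show finrank ℝ (VS (A ∪ B)) = _
      rw [hVSunion]
    have h2 : VS (A ∩ B) ≤ VS A ⊓ VS B :=
      le_inf (hVSmono Finset.inter_subset_left) (hVSmono Finset.inter_subset_right)
    have h3 := Submodule.finrank_sup_add_finrank_inf_eq (VS A) (VS B)
    have h4 : r (A ∩ B) ≤ finrank ℝ (VS A ⊓ VS B : Submodule ℝ W) :=
      Submodule.finrank_mono h2
    have h5 : r A = finrank ℝ (VS A) := rfl
    have h6 : r B = finrank ℝ (VS B) := rfl
    omega
  have tight_union_inter : ∀ I I' : Finset (Fin n), Tight I → Tight I' →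
      Tight (I ∪ I') ∧ Tight (I ∩ I') := by
    intro I I' h h'
    have c1 := hxc' (I ∪ I')
    have c2 := hxc' (I ∩ I')
    have hsub := hsubmod Iᶜ I'ᶜ
    rw [← Finset.compl_union, ← Finset.compl_inter] at hsub
    have hsum : ∑ i ∈ I ∪ I', x i + ∑ i ∈ I ∩ I', x i = ∑ i ∈ I, x i + ∑ i ∈ I', x i :=
      Finset.sum_union_inter
    have hA : ∑ i ∈ I, x i + (r Iᶜ : ℝ) = s := h
    have hB : ∑ i ∈ I', x i + (r I'ᶜ : ℝ) = s := h'
    have hsubR : ((r (I ∩ I')ᶜ : ℝ)) + (r (I ∪ I')ᶜ : ℝ) ≤ (r Iᶜ : ℝ) + (r I'ᶜ : ℝ) := by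
      exact_mod_cast hsub
    constructor
    · show ∑ i ∈ I ∪ I', x i + (r (I ∪ I')ᶜ : ℝ) = s
      linarith
    · show ∑ i ∈ I ∩ I', x i + (r (I ∩ I')ᶜ : ℝ) = s
      linarith
  have tight_sup : ∀ (T : Finset (Finset (Fin n))), (∀ I ∈ T, Tight I) → T.Nonempty →
      Tight (T.sup id) := by
    intro T
    induction T using Finset.induction_on with
    | empty => intro _ h; exact absurd h (by simp)
    | @insert a T' ha ih =>
      intro hall hne
      rcases T'.eq_empty_or_nonempty with rfl | hne'
      · simpa using hall a (by simp)
      · have h1 := ih (fun I hI => hall I (Finset.mem_insert_of_mem hI)) hne'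
        have h2 := hall a (Finset.mem_insert_self _ _)
        have h3 := (tight_union_inter _ _ h2 h1).1
        rw [Finset.sup_insert]
        exact h3
  have tight_inf : ∀ (T : Finset (Finset (Fin n))), (∀ I ∈ T, Tight I) → T.Nonempty →
      Tight (T.inf id) := by
    intro T
    induction T using Finset.induction_on with
    | empty => intro _ h; exact absurd h (by simp)
    | @insert a T' ha ih =>
      intro hall hne
      rcases T'.eq_empty_or_nonempty with rfl | hne'
      · simpa using hall a (by simp)
      · have h1 := ih (fun I hI => hall I (Finset.mem_insert_of_mem hI)) hne'
        have h2 := hall a (Finset.mem_insert_self _ _)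
        have h3 := (tight_union_inter _ _ h2 h1).2
        rw [Finset.inf_insert]
        exact h3
  have mem_inf_of : ∀ (T : Finset (Finset (Fin n))) (j : Fin n), (∀ I ∈ T, j ∈ I) →
      T.Nonempty → j ∈ T.inf id := by
    intro T
    induction T using Finset.induction_on with
    | empty => intro _ _ h; exact absurd h (by simp)
    | @insert a T' ha ih =>
      intro j hall hne
      rcases T'.eq_empty_or_nonempty with rfl | hne'
      · simpa using hall a (by simp)
      · rw [Finset.inf_insert]
        refine Finset.mem_inter.2 ⟨hall a (Finset.mem_insert_self _ _), ?_⟩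
        exact ih j (fun I hI => hall I (Finset.mem_insert_of_mem hI)) hne'
  have exists_tight : ∀ j : Fin n, x j ≠ 0 → ∃ I, Tight I ∧ j ∈ I := by
    intro j hj
    by_contra hno
    push_neg at hno
    have h1 := key (fun k => if k = j then 1 else 0) ?_ ?_
    · have h2 := congrFun h1 j
      simp at h2
    · intro k hk
      by_cases h : k = j
      · subst h; exact absurd hk hj
      · simp [h]
    · intro I hI
      rw [Finset.sum_ite_eq' I j (fun _ => (1:ℝ))]
      rw [if_neg (hno I hI)]
  -- minimal tight set containing j
  set Mm : Fin n → Finset (Fin n) :=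
    fun j => (Finset.univ.filter (fun I => Tight I ∧ j ∈ I)).inf id with hMmdef
  have hMfacts : ∀ j : Fin n, x j ≠ 0 → Tight (Mm j) ∧ j ∈ Mm j := by
    intro j hj
    obtain ⟨I, hI, hjI⟩ := exists_tight j hj
    have hne : (Finset.univ.filter (fun I : Finset (Fin n) => Tight I ∧ j ∈ I)).Nonempty := by
      refine ⟨I, ?_⟩
      simp only [Finset.mem_filter]
      exact ⟨Finset.mem_univ _, hI, hjI⟩
    constructor
    · exact tight_inf _ (fun I' hI' => ((Finset.mem_filter.1 hI').2).1) hne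
    · exact mem_inf_of _ j (fun I' hI' => ((Finset.mem_filter.1 hI').2).2) hne
  have hM_min : ∀ (j : Fin n) (I : Finset (Fin n)), Tight I → j ∈ I → Mm j ⊆ I := by
    intro j I hI hjI
    have h1 : (Finset.univ.filter (fun I2 : Finset (Fin n) => Tight I2 ∧ j ∈ I2)).inf id ≤ id I := by
      apply Finset.inf_le
      simp only [Finset.mem_filter]
      exact ⟨Finset.mem_univ _, hI, hjI⟩
    exact h1
  have hMinj : ∀ j l : Fin n, x j ≠ 0 → x l ≠ 0 → j ≠ l → Mm j ≠ Mm l := by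
    intro j l hj hl hne heq
    have hiff : ∀ I : Finset (Fin n), Tight I → (j ∈ I ↔ l ∈ I) := by
      intro I hI
      constructor
      · intro hji
        have h1 := hM_min j I hI hji
        have h2 : l ∈ Mm l := (hMfacts l hl).2
        rw [← heq] at h2
        exact h1 h2
      · intro hli
        have h1 := hM_min l I hI hli
        have h2 : j ∈ Mm j := (hMfacts j hj).2
        rw [heq] at h2
        exact h1 h2
    have h1 := key (fun k => (if k = j then (1:ℝ) else 0) - (if k = l then 1 else 0)) ?_ ?_
    · have h2 := congrFun h1 j
      simp [hne] at h2
    · intro k hk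
      have hkj : k ≠ j := fun h => hj (h ▸ hk)
      have hkl : k ≠ l := fun h => hl (h ▸ hk)
      simp [hkj, hkl]
    · intro I hI
      rw [Finset.sum_sub_distrib, Finset.sum_ite_eq' I j (fun _ => (1:ℝ)),
        Finset.sum_ite_eq' I l (fun _ => (1:ℝ))]
      by_cases h : j ∈ I
      · rw [if_pos h, if_pos ((hiff I hI).1 h), sub_self]
      · rw [if_neg h, if_neg (fun hl2 => h ((hiff I hI).2 hl2)), sub_self]
  have hMsub : ∀ j l : Fin n, x j ≠ 0 → x l ≠ 0 → l ∈ Mm j → l ≠ j → Mm l ⊂ Mm j := by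
    intro j l hj hl hlM hlj
    have h1 : Mm l ⊆ Mm j := hM_min l (Mm j) (hMfacts j hj).1 hlM
    exact h1.ssubset_of_ne (hMinj l j hl hj hlj)
  -- ### per-coordinate structure
  have structure_fact : ∀ j : Fin n, x j ≠ 0 →
      (∃ c : ℕ, (c:ℝ) = x j ∧
        c + r (Mm j)ᶜ = finrank ℝ (VS (Mm j)ᶜ ⊔ V j : Submodule ℝ W)) ∨
      ((∀ I : Finset (Fin n), Tight I → Mm j ⊆ I) ∧
        x j + (r (Mm j)ᶜ : ℝ) ≤ (finrank ℝ (VS (Mm j)ᶜ ⊔ V j : Submodule ℝ W) : ℝ)) := by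
    intro j hj
    obtain ⟨hMt, hjM⟩ := hMfacts j hj
    set P : Finset (Finset (Fin n)) :=
      Finset.univ.filter (fun I => Tight I ∧ I ⊂ Mm j) with hPdef
    have hPmem : ∀ I : Finset (Fin n), I ∈ P ↔ Tight I ∧ I ⊂ Mm j := by
      intro I
      simp only [hPdef, Finset.mem_filter, Finset.mem_univ, true_and]
    rcases P.eq_empty_or_nonempty with hPe | hPne
    · -- case (b)
      right
      have hleast : ∀ I : Finset (Fin n), Tight I → Mm j ⊆ I := by
        intro I hI
        have h1 : Tight (I ∩ Mm j) := (tight_union_inter I (Mm j) hI hMt).2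
        have h2 : I ∩ Mm j ⊆ Mm j := Finset.inter_subset_right
        rcases eq_or_ne (I ∩ Mm j) (Mm j) with h3 | h3
        · exact (Finset.inter_eq_right.1 h3)
        · exfalso
          have h4 : I ∩ Mm j ∈ P := (hPmem _).2 ⟨h1, h2.ssubset_of_ne h3⟩
          rw [hPe] at h4
          exact Finset.notMem_empty _ h4
      have hzeros : ∀ l ∈ (Mm j).erase j, x l = 0 := by
        intro l hl
        obtain ⟨hlj, hlM⟩ := Finset.mem_erase.1 hl
        by_contra hlx
        have h1 := hMsub j l hj hlx hlM hlj
        have h2 : Mm l ∈ P := (hPmem _).2 ⟨(hMfacts l hlx).1, h1⟩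
        rw [hPe] at h2
        exact Finset.notMem_empty _ h2
      have hsum_er : ∑ l ∈ (Mm j).erase j, x l = 0 := Finset.sum_eq_zero hzeros
      have hsum_M : ∑ l ∈ Mm j, x l = x j := by
        rw [← Finset.sum_erase_add (Mm j) x hjM, hsum_er, zero_add]
      have hMt' : ∑ l ∈ Mm j, x l + (r (Mm j)ᶜ : ℝ) = s := hMt
      have hxj : x j + (r (Mm j)ᶜ : ℝ) = s := by rw [← hsum_M]; exact hMt'
      refine ⟨hleast, ?_⟩
      have hcon := hxc' ((Mm j).erase j)
      rw [Finset.compl_erase] at hcon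
      have hVSi : r (insert j (Mm j)ᶜ) = finrank ℝ (V j ⊔ VS (Mm j)ᶜ : Submodule ℝ W) := by
        show finrank ℝ (VS (insert j (Mm j)ᶜ)) = _
        rw [show VS (insert j (Mm j)ᶜ) = V j ⊔ VS (Mm j)ᶜ from Finset.sup_insert]
      rw [hVSi] at hcon
      rw [hsum_er, zero_add] at hcon
      rw [sup_comm] at hcon
      linarith
    · -- case (a)
      left
      set N : Finset (Fin n) := P.sup id with hNdef
      have hNt : Tight N := tight_sup P (fun I hI => ((hPmem I).1 hI).1) hPne
      have hNsubM : N ⊆ Mm j :=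
        Finset.sup_le (fun I hI => ((hPmem I).1 hI).2.subset)
      have hjN : j ∉ N := by
        intro hjN
        obtain ⟨I, hIP, hjI⟩ := Finset.mem_sup.1 hjN
        obtain ⟨hIt, hIss⟩ := (hPmem I).1 hIP
        exact absurd (hM_min j I hIt hjI) (fun h => (hIss.not_subset) h)
      have hzeros : ∀ l ∈ Mm j, l ∉ insert j N → x l = 0 := by
        intro l hlM hlni
        by_contra hlx
        have hlj : l ≠ j := fun h => hlni (h ▸ Finset.mem_insert_self j N)
        have h1 := hMsub j l hj hlx hlM hlj
        have h2 : Mm l ∈ P := (hPmem _).2 ⟨(hMfacts l hlx).1, h1⟩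
        have h3 : l ∈ N := Finset.mem_sup.2 ⟨Mm l, h2, (hMfacts l hlx).2⟩
        exact hlni (Finset.mem_insert_of_mem h3)
      have hins_sub : insert j N ⊆ Mm j := Finset.insert_subset hjM hNsubM
      have hsum1 : ∑ l ∈ insert j N, x l = ∑ l ∈ Mm j, x l :=
        Finset.sum_subset hins_sub (fun l hl hln => hzeros l hl hln)
      have hsum2 : ∑ l ∈ insert j N, x l = x j + ∑ l ∈ N, x l :=
        Finset.sum_insert hjN
      have hMt' : ∑ l ∈ Mm j, x l + (r (Mm j)ᶜ : ℝ) = s := hMt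
      have hNt' : ∑ l ∈ N, x l + (r Nᶜ : ℝ) = s := hNt
      have hxj : x j = (r Nᶜ : ℝ) - (r (Mm j)ᶜ : ℝ) := by linarith [hsum1, hsum2]
      have hrle : r (Mm j)ᶜ ≤ r Nᶜ := hr_mono (Finset.compl_subset_compl.2 hNsubM)
      -- dimension identity
      have hsum_er : ∑ l ∈ (Mm j).erase j, x l = ∑ l ∈ N, x l := by
        have := Finset.sum_erase_add (Mm j) x hjM
        linarith [hsum1, hsum2]
      have hcon := hxc' ((Mm j).erase j)
      rw [Finset.compl_erase] at hcon
      have hVSi : r (insert j (Mm j)ᶜ) = finrank ℝ (V j ⊔ VS (Mm j)ᶜ : Submodule ℝ W) := by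
        show finrank ℝ (VS (insert j (Mm j)ᶜ)) = _
        rw [show VS (insert j (Mm j)ᶜ) = V j ⊔ VS (Mm j)ᶜ from Finset.sup_insert]
      rw [hVSi, hsum_er] at hcon
      have hrNle : (r Nᶜ : ℝ) ≤ (finrank ℝ (V j ⊔ VS (Mm j)ᶜ : Submodule ℝ W) : ℝ) := by
        linarith
      have hle : V j ⊔ VS (Mm j)ᶜ ≤ VS Nᶜ := by
        apply sup_le
        · exact Finset.le_sup (Finset.mem_compl.2 hjN)
        · exact hVSmono (Finset.compl_subset_compl.2 hNsubM)
      have heq : V j ⊔ VS (Mm j)ᶜ = VS Nᶜ := by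
        apply Submodule.eq_of_le_of_finrank_le hle
        exact_mod_cast hrNle
      refine ⟨r Nᶜ - r (Mm j)ᶜ, ?_, ?_⟩
      · rw [hxj]
        push_cast [hrle]
        ring
      · have h9 : finrank ℝ (VS (Mm j)ᶜ ⊔ V j : Submodule ℝ W) = r Nᶜ := by
          rw [sup_comm, heq]
        omega
  -- ### the sum of all coordinates is s
  have hsum_x : ∑ l, x l = s := by
    rcases Classical.em (∃ j : Fin n, x j ≠ 0) with ⟨j0, hj0⟩ | hall
    · set TS : Finset (Finset (Fin n)) := Finset.univ.filter (fun I => Tight I) with hTSdef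
      have hTSne : TS.Nonempty := by
        obtain ⟨I, hI, -⟩ := exists_tight j0 hj0
        exact ⟨I, by simp only [hTSdef, Finset.mem_filter]; exact ⟨Finset.mem_univ _, hI⟩⟩
      set Istar : Finset (Fin n) := TS.sup id with hIsdef
      have hIst : Tight Istar :=
        tight_sup TS (fun I hI => (Finset.mem_filter.1 hI).2) hTSne
      have hsub : ∀ l : Fin n, x l ≠ 0 → l ∈ Istar := by
        intro l hl
        obtain ⟨I, hI, hlI⟩ := exists_tight l hl
        exact Finset.mem_sup.2 ⟨I, by simp only [hTSdef, Finset.mem_filter]; exact ⟨Finset.mem_univ _, hI⟩, hlI⟩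
      have hsum1 : ∑ l ∈ Istar, x l = ∑ l, x l := by
        apply Finset.sum_subset (Finset.subset_univ _)
        intro l _ hln
        by_contra hlx
        exact hln (hsub l hlx)
      have hIst' : ∑ l ∈ Istar, x l + (r Istarᶜ : ℝ) = s := hIst
      have huniv := hxc' (Finset.univ : Finset (Fin n))
      have hcompl : (Finset.univ : Finset (Fin n))ᶜ = ∅ := Finset.compl_univ
      have hrzero : r (Finset.univ : Finset (Fin n))ᶜ = 0 := by
        rw [hcompl]
        show finrank ℝ (VS ∅) = 0
        rw [show VS ∅ = ⊥ from Finset.sup_empty]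
        exact finrank_bot ℝ W
      rw [hrzero] at huniv
      have hrpos : (0:ℝ) ≤ (r Istarᶜ : ℝ) := Nat.cast_nonneg _
      push_cast at huniv
      linarith [hsum1, hIst', hrpos, huniv]
    · push_neg at hall
      have h1 : ∑ l, x l = 0 := Finset.sum_eq_zero (fun l _ => hall l)
      have huniv := hxc' (Finset.univ : Finset (Fin n))
      have hcompl : (Finset.univ : Finset (Fin n))ᶜ = ∅ := Finset.compl_univ
      have hrzero : r (Finset.univ : Finset (Fin n))ᶜ = 0 := by
        rw [hcompl]
        show finrank ℝ (VS ∅) = 0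
        rw [show VS ∅ = ⊥ from Finset.sup_empty]
        exact finrank_bot ℝ W
      rw [hrzero] at huniv
      push_cast at huniv
      rw [h1] at huniv ⊢
      linarith
  -- ### choice of the special coordinate
  set caseA : Fin n → Prop := fun j => ∃ c : ℕ, (c:ℝ) = x j ∧
    c + r (Mm j)ᶜ = finrank ℝ (VS (Mm j)ᶜ ⊔ V j : Submodule ℝ W) with hcaseAdef
  have hBuniq : ∀ j l : Fin n, x j ≠ 0 → x l ≠ 0 →
      (∀ I : Finset (Fin n), Tight I → Mm j ⊆ I) →
      (∀ I : Finset (Fin n), Tight I → Mm l ⊆ I) → j = l := by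
    intro j l hj hl hBj hBl
    by_contra hne
    have h1 : Mm j ⊆ Mm l := hBj (Mm l) (hMfacts l hl).1
    have h2 : Mm l ⊆ Mm j := hBl (Mm j) (hMfacts j hj).1
    exact hMinj j l hj hl hne (Finset.Subset.antisymm h1 h2)
  set i : Fin n := if h : ∃ j : Fin n, x j ≠ 0 ∧ ¬ caseA j then h.choose else ⟨0, hn⟩
    with hidef
  have fact1 : ∀ l : Fin n, x l ≠ 0 → l ≠ i → caseA l := by
    intro l hl hli
    by_contra hnA
    have hex : ∃ j : Fin n, x j ≠ 0 ∧ ¬ caseA j := ⟨l, hl, hnA⟩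
    have hi : i = hex.choose := by rw [hidef, dif_pos hex]
    obtain ⟨hi1, hi2⟩ := hex.choose_spec
    have hBl : ∀ I : Finset (Fin n), Tight I → Mm l ⊆ I := by
      rcases structure_fact l hl with hA | hB
      · exact absurd hA hnA
      · exact hB.1
    have hBc : ∀ I : Finset (Fin n), Tight I → Mm hex.choose ⊆ I := by
      rcases structure_fact hex.choose hi1 with hA | hB
      · exact absurd hA hi2
      · exact hB.1
    exact hli (by rw [hi]; exact hBuniq l hex.choose hl hi1 hBl hBc)
  have fact2 : x i ≠ 0 →
      ⌈x i⌉₊ + r (Mm i)ᶜ ≤ finrank ℝ (VS (Mm i)ᶜ ⊔ V i : Submodule ℝ W) := by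
    intro hi
    have hle : r (Mm i)ᶜ ≤ finrank ℝ (VS (Mm i)ᶜ ⊔ V i : Submodule ℝ W) := by
      have h1 : finrank ℝ (VS (Mm i)ᶜ) ≤ finrank ℝ (VS (Mm i)ᶜ ⊔ V i : Submodule ℝ W) :=
        Submodule.finrank_mono le_sup_left
      exact h1
    rcases structure_fact i hi with ⟨c0, hc1, hc2⟩ | hB
    · rw [← hc1, Nat.ceil_natCast]
      omega
    · have hf : x i ≤ ((finrank ℝ (VS (Mm i)ᶜ ⊔ V i : Submodule ℝ W) - r (Mm i)ᶜ : ℕ) : ℝ) := by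
        rw [Nat.cast_sub hle]
        linarith [hB.2]
      have h2 := Nat.ceil_le.2 hf
      omega
  set cc : Fin n → ℕ := fun l =>
    if h : x l ≠ 0 ∧ l ≠ i then (fact1 l h.1 h.2).choose
    else (if l = i then ⌈x i⌉₊ else 0) with hccdef
  have hcc_cast : ∀ l : Fin n, l ≠ i → (cc l : ℝ) = x l := by
    intro l hl
    rcases eq_or_ne (x l) 0 with h0 | h0
    · have hcond : ¬ (x l ≠ 0 ∧ l ≠ i) := fun h => h.1 h0
      simp only [hccdef, dif_neg hcond, if_neg hl, Nat.cast_zero, h0]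
    · have hcond : x l ≠ 0 ∧ l ≠ i := ⟨h0, hl⟩
      simp only [hccdef, dif_pos hcond]
      exact (fact1 l hcond.1 hcond.2).choose_spec.1
  have hcc_bound : ∀ l : Fin n, x l ≠ 0 →
      cc l + r (Mm l)ᶜ ≤ finrank ℝ (VS (Mm l)ᶜ ⊔ V l : Submodule ℝ W) := by
    intro l hl
    rcases eq_or_ne l i with rfl | hli
    · have hcond : ¬ (x i ≠ 0 ∧ i ≠ i) := fun h => h.2 rfl
      have h1 : cc i = ⌈x i⌉₊ := by
        simp only [hccdef, dif_neg hcond, if_pos rfl, if_true, eq_self_iff_true]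
      rw [h1]
      exact fact2 hl
    · have hcond : x l ≠ 0 ∧ l ≠ i := ⟨hl, hli⟩
      have h1 : cc l = (fact1 l hcond.1 hcond.2).choose := by
        simp only [hccdef, dif_pos hcond]
      rw [h1, (fact1 l hcond.1 hcond.2).choose_spec.2]
  have hMQ : ∀ l : Fin n, x l ≠ 0 → ∀ l2 : Fin n, x l2 ≠ 0 → l2 ≠ l → l2 ∈ Mm l →
      (Mm l2).card < (Mm l).card := by
    intro l hl l2 hl2 hne hmem
    exact Finset.card_lt_card (hMsub l l2 hl hl2 hmem hne)
  -- ### greedy construction of the independent family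
  have ind : ∀ (NN : ℕ) (Q : Finset (Fin n)), Q.card ≤ NN → (∀ l ∈ Q, x l ≠ 0) →
      ∃ J : (l : Fin n) → Finset (Fin (m l)),
        (∀ l, l ∉ Q → J l = ∅) ∧ (∀ l ∈ Q, (J l).card = cc l) ∧
        LinearIndependent ℝ (fun p : Σ l : Fin n, {k // k ∈ J l} => v p.1 p.2.1) := by
    intro NN
    induction NN with
    | zero =>
      intro Q hQ _
      have hQe : Q = ∅ := Finset.card_eq_zero.1 (Nat.le_zero.1 hQ)
      subst hQe
      refine ⟨fun _ => ∅, fun _ _ => rfl,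
        fun l hl => absurd hl (Finset.notMem_empty l), ?_⟩
      haveI h1 : ∀ l : Fin n, IsEmpty {k // k ∈ (∅ : Finset (Fin (m l)))} :=
        fun l => ⟨fun k => Finset.notMem_empty _ k.2⟩
      haveI : IsEmpty (Σ l : Fin n, {k // k ∈ (∅ : Finset (Fin (m l)))}) :=
        ⟨fun p => (h1 p.1).false p.2⟩
      exact linearIndependent_empty_type
    | succ NN ih =>
      intro Q hQcard hQS
      rcases Q.eq_empty_or_nonempty with rfl | hne
      · exact ih ∅ (by simp) (by simp)
      · obtain ⟨j, hjQ, hjmin⟩ := Q.exists_min_image (fun l => (Mm l).card) hne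
        obtain ⟨J', hJ1, hJ2, hJ3⟩ := ih (Q.erase j)
          (by have := Finset.card_erase_of_mem hjQ; omega)
          (fun l hl => hQS l (Finset.mem_of_mem_erase hl))
        set X : Submodule ℝ W := VS ((Mm j)ᶜ) with hXdef
        have hsubX : ∀ l ∈ Q.erase j, V l ≤ X := by
          intro l hl
          have hlQ := Finset.mem_of_mem_erase hl
          have hlj := Finset.ne_of_mem_erase hl
          have hlM : l ∉ Mm j := by
            intro hmem
            have h1 := hMQ j (hQS j hjQ) l (hQS l hlQ) hlj hmem
            have h2 := hjmin l hlQ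
            omega
          exact Finset.le_sup (Finset.mem_compl.2 hlM)
        have hrank : cc j ≤ finrank ℝ (span ℝ (range (fun k => X.mkQ (v j k)))) := by
          have hspan : span ℝ (range (fun k => X.mkQ (v j k))) = (V j).map X.mkQ := by
            rw [← hv j]
            rw [show (range (fun k => X.mkQ (v j k))) = X.mkQ '' (range (v j)) by
              rw [← Set.range_comp]; rfl]
            exact (Submodule.map_span X.mkQ _).symm
          rw [hspan]
          have hfr := VPHaux.finrank_map_mkQ X (V j)
          have hb := hcc_bound j (hQS j hjQ)
          have hsup : finrank ℝ (VS (Mm j)ᶜ ⊔ V j : Submodule ℝ W)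
              = finrank ℝ (X ⊔ V j : Submodule ℝ W) := rfl
          have hXr : r (Mm j)ᶜ = finrank ℝ X := rfl
          omega
        obtain ⟨F, hFcard, hFind⟩ :=
          VPHaux.exists_finset_indep (fun k => X.mkQ (v j k)) (cc j) hrank
        have hold_in : ∀ p : Σ l : Fin n, {k // k ∈ J' l}, v p.1 p.2.1 ∈ X := by
          intro p
          have hp : p.1 ∈ Q.erase j := by
            by_contra h
            have h1 := hJ1 p.1 h
            exact (Finset.eq_empty_iff_forall_notMem.mp h1) p.2.1 p.2.2
          apply hsubX p.1 hp
          rw [← hv p.1]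
          exact subset_span (mem_range_self _)
        have hcomb := VPHaux.indep_append X
          (fun p : Σ l : Fin n, {k // k ∈ J' l} => v p.1 p.2.1)
          (fun k : {k // k ∈ F} => v j k.1) hJ3 hold_in hFind
        have hJ'j : J' j = ∅ := hJ1 j (Finset.notMem_erase j Q)
        have hupd := VPHaux.indep_sigma_update v J' j F hJ'j hcomb
        refine ⟨Function.update J' j F, ?_, ?_, hupd⟩
        · intro l hl
          have hlj : l ≠ j := fun h => hl (h ▸ hjQ)
          rw [Function.update_of_ne hlj]
          exact hJ1 l (fun h => hl (Finset.mem_of_mem_erase h))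
        · intro l hl
          rcases eq_or_ne l j with rfl | hlj
          · rw [Function.update_self]; exact hFcard
          · rw [Function.update_of_ne hlj]
            exact hJ2 l (Finset.mem_erase.2 ⟨hlj, hl⟩)
  -- ### final assembly
  set S : Finset (Fin n) := Finset.univ.filter (fun l => x l ≠ 0) with hSdef
  obtain ⟨J, hJ1, hJ2, hJ3⟩ := ind S.card S le_rfl
    (fun l hl => (Finset.mem_filter.1 hl).2)
  have hcard_all : ∀ l : Fin n, l ≠ i → ((J l).card : ℝ) = x l := by
    intro l hl
    rcases eq_or_ne (x l) 0 with h0 | h0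
    · have hns : l ∉ S := by simp [hSdef, h0]
      rw [hJ1 l hns]
      simp [h0]
    · have hlS : l ∈ S := by simp [hSdef, h0]
      rw [hJ2 l hlS]
      exact hcc_cast l hl
  have hcard_i : ((J i).card : ℝ) = (⌈x i⌉₊ : ℝ) := by
    rcases eq_or_ne (x i) 0 with h0 | h0
    · have hns : i ∉ S := by simp [hSdef, h0]
      rw [hJ1 i hns]
      simp [h0]
    · have hiS : i ∈ S := by simp [hSdef, h0]
      rw [hJ2 i hiS]
      have hcond : ¬ (x i ≠ 0 ∧ i ≠ i) := fun h => h.2 rfl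
      have h1 : cc i = ⌈x i⌉₊ := by
        simp only [hccdef, dif_neg hcond, if_pos rfl, if_true, eq_self_iff_true]
      rw [h1]
  have hsum_cards : ∑ l, ((J l).card : ℝ) = (s - x i) + (⌈x i⌉₊ : ℝ) := by
    rw [← Finset.sum_erase_add Finset.univ _ (Finset.mem_univ i)]
    have h1 : ∑ l ∈ Finset.univ.erase i, ((J l).card : ℝ)
        = ∑ l ∈ Finset.univ.erase i, x l := by
      apply Finset.sum_congr rfl
      intro l hl
      exact hcard_all l (Finset.ne_of_mem_erase hl)
    have h2 : ∑ l ∈ Finset.univ.erase i, x l + x i = ∑ l, x l :=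
      Finset.sum_erase_add _ _ (Finset.mem_univ i)
    rw [h1, hcard_i]
    rw [hsum_x] at h2
    linarith
  have heq : x = hatJ s J i := by
    funext j
    show x j = ((J j).card : ℝ) + (if j = i then s - ∑ l, ((J l).card : ℝ) else 0)
    rcases eq_or_ne j i with rfl | hji
    · rw [if_pos rfl, hsum_cards, hcard_i]
      ring
    · rw [if_neg hji, add_zero, hcard_all j hji]
  refine ⟨⟨J, i⟩, ⟨⟨hJ3, ?_⟩, ?_⟩, heq⟩
  · rw [hsum_cards]
    have h3 := Nat.le_ceil (x i)
    linarith
  · intro j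
    rw [← heq]
    exact hx0 j
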